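/- Let m be a nonnegative integer, I ∈ 𝕊, and let f : ℝ → ℍ be measurable with ∫_ℝ |f(t)|² dt < ∞. Set φ(t) := e^{−t²/2}·H_m(−t) and define the left-sided quaternionic Fourier–Wigner transform V_I(f,φ)(x+Iy) := (2π)^{−1/2}·∫_ℝ exp(Iyt)·f(t + x/2)·φ(t − x/2) dt. Then for all x ∈ ℝ and y ∈ ℝ, with q := x + Iy: V_I(f,φ)(q) = (√π·m!)^{1/2}·2^{(m−1)/2}·e^{−|q|²/4}·[B_m f](q̄/√2). -/

import Mathlib

open MeasureTheory Quaternion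

noncomputable section
set_option maxHeartbeats 2000000

instance : MeasurableSpace ℍ[ℝ] := borel _
instance : BorelSpace ℍ[ℝ] := ⟨rfl⟩

/-- physicists' Hermite polynomial `H_m(x) = (−1)^m e^{x²} (d/dx)^m e^{−x²}` -/
def physHermite (m : ℕ) (x : ℝ) : ℝ :=
  (-1) ^ m * Real.exp (x ^ 2) * iteratedDeriv m (fun t => Real.exp (-t ^ 2)) x

/-- Segal–Bargmann kernel
`A_m(t;q) = π^{−3/4}(2^m m!)^{−1/2}·exp(−t²/2 − q̄²/2 + √2·t·q̄)·H_m(√2·Re q − t)` -/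
def kernelA (m : ℕ) (t : ℝ) (q : ℍ[ℝ]) : ℍ[ℝ] :=
  (Real.pi ^ (-(3 : ℝ) / 4) * (Real.sqrt (2 ^ m * Nat.factorial m))⁻¹) •
    (NormedSpace.exp
        (((-(t ^ 2) / 2 : ℝ) : ℍ[ℝ]) - star q ^ 2 / 2 + (Real.sqrt 2 * t) • star q) *
      ((physHermite m (Real.sqrt 2 * q.re - t) : ℝ) : ℍ[ℝ]))

/-- generalized quaternionic Segal–Bargmann transform `[B_m φ](q) = ∫ A_m(t;q)·φ(t) dt` -/
def SB (m : ℕ) (φ : ℝ → ℍ[ℝ]) (q : ℍ[ℝ]) : ℍ[ℝ] := ∫ t : ℝ, kernelA m t q * φ t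

section aux

/-- The constant identity. -/
lemma stmt18_const (m : ℕ) : (Real.sqrt (2 * Real.pi))⁻¹
    = Real.sqrt (Real.sqrt Real.pi * Nat.factorial m) * (2:ℝ) ^ (((m:ℝ)-1)/2)
      * (Real.pi ^ (-(3:ℝ)/4) * (Real.sqrt ((2:ℝ) ^ m * Nat.factorial m))⁻¹) := by
  have hs : (0:ℝ) < Real.sqrt m.factorial := by positivity
  have h1 : Real.sqrt (Real.sqrt Real.pi * m.factorial)
      = Real.pi ^ ((1:ℝ)/4) * Real.sqrt m.factorial := by
    rw [Real.sqrt_mul (Real.sqrt_nonneg _), Real.sqrt_eq_rpow, Real.sqrt_eq_rpow Real.pi,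
      ← Real.rpow_mul Real.pi_pos.le]
    norm_num
  have h2 : Real.sqrt ((2:ℝ) ^ m * m.factorial)
      = (2:ℝ) ^ ((m:ℝ)*(1/2)) * Real.sqrt m.factorial := by
    rw [Real.sqrt_mul (by positivity), Real.sqrt_eq_rpow, ← Real.rpow_natCast 2 m,
      ← Real.rpow_mul (by norm_num)]
  have h3 : (Real.sqrt (2 * Real.pi))⁻¹ = (2:ℝ) ^ (-(1:ℝ)/2) * Real.pi ^ (-(1:ℝ)/2) := by
    rw [Real.sqrt_mul (by norm_num), mul_inv, Real.sqrt_eq_rpow, Real.sqrt_eq_rpow,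
      ← Real.rpow_neg (by norm_num), ← Real.rpow_neg Real.pi_pos.le]
    norm_num
  have e1 : Real.pi ^ (-(1:ℝ)/2) = Real.pi ^ ((1:ℝ)/4) * Real.pi ^ (-(3:ℝ)/4) := by
    rw [← Real.rpow_add Real.pi_pos]; norm_num
  have e2 : (2:ℝ) ^ (-(1:ℝ)/2) = (2:ℝ) ^ (((m:ℝ)-1)/2) * ((2:ℝ) ^ ((m:ℝ)*(1/2)))⁻¹ := by
    rw [← Real.rpow_neg (by norm_num), ← Real.rpow_add (by norm_num)]
    congr 1; ring
  rw [h1, h2, h3, mul_inv, e1, e2]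
  have h2pos : (0:ℝ) < (2:ℝ) ^ ((m:ℝ)*(1/2)) := Real.rpow_pos_of_pos (by norm_num) _
  field_simp

/-- The exponent identity. -/
lemma stmt18_expo (I : ℍ[ℝ]) (hre : I.re = 0)
    (hn : I.imI^2 + I.imJ^2 + I.imK^2 = 1) (x y s : ℝ) :
    (((-(s ^ 2) / 2 : ℝ)) : ℍ[ℝ]) - star ((Real.sqrt 2)⁻¹ • star ((x : ℍ[ℝ]) + y • I)) ^ 2 / 2
      + (Real.sqrt 2 * s) • star ((Real.sqrt 2)⁻¹ • star ((x : ℍ[ℝ]) + y • I))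
    = (((-(s^2)/2 + s*x - (x^2 - y^2)/4 : ℝ)) : ℍ[ℝ]) + (y * (s - x/2)) • I := by
  have hw : Real.sqrt 2 ^ 2 = 2 := Real.sq_sqrt (by norm_num)
  have hi : (Real.sqrt 2)⁻¹ = Real.sqrt 2 / 2 := by
    rw [eq_div_iff (by norm_num), inv_mul_eq_div, div_eq_iff (by positivity)]
    nlinarith [hw]
  have c2 : (2 : ℍ[ℝ]) = ((2:ℝ) : ℍ[ℝ]) := by norm_cast
  rw [div_eq_mul_inv _ (2:ℍ[ℝ]), c2, ← Quaternion.coe_inv]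
  ext <;>
    simp only [hi, pow_two, Quaternion.re_mul, Quaternion.imI_mul, Quaternion.imJ_mul,
      Quaternion.imK_mul, Quaternion.re_sub, Quaternion.imI_sub, Quaternion.imJ_sub,
      Quaternion.imK_sub, Quaternion.re_add, Quaternion.imI_add, Quaternion.imJ_add,
      Quaternion.imK_add, Quaternion.re_smul, Quaternion.imI_smul, Quaternion.imJ_smul,
      Quaternion.imK_smul, Quaternion.re_star, Quaternion.imI_star, Quaternion.imJ_star,
      Quaternion.imK_star, Quaternion.re_coe, Quaternion.imI_coe, Quaternion.imJ_coe,
      Quaternion.imK_coe, hre, smul_eq_mul]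
  · linear_combination (Real.sqrt 2 ^2*y^2/8) * hn + (s*x/2 - x^2/8 + y^2/8) * hw
  · linear_combination ((y*I.imI*s)/2 - (x*y*I.imI)/4) * hw
  · linear_combination ((y*I.imJ*s)/2 - (x*y*I.imJ)/4) * hw
  · linear_combination ((y*I.imK*s)/2 - (x*y*I.imK)/4) * hw

end aux

/-- For `φ(t) = e^{−t²/2}·H_m(−t)`, the left-sided quaternionic
Fourier–Wigner transform `V_I(f,φ)` satisfies
`V_I(f,φ)(q) = (√π·m!)^{1/2}·2^{(m−1)/2}·e^{−|q|²/4}·[B_m f](q̄/√2)` at `q = x + Iy`. -/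
theorem stmt18 (m : ℕ) (I : ℍ[ℝ]) (hI : I ^ 2 = -1) (f : ℝ → ℍ[ℝ])
    (hf : Measurable f) (hf2 : (∫⁻ t : ℝ, (‖f t‖₊ : ENNReal) ^ 2) < ⊤) (x y : ℝ) :
    (Real.sqrt (2 * Real.pi))⁻¹ •
        ∫ t : ℝ,
          (Real.exp (-(t - x / 2) ^ 2 / 2) * physHermite m (-(t - x / 2))) •
            (NormedSpace.exp ((y * t) • I) * f (t + x / 2)) =
      (Real.sqrt (Real.sqrt Real.pi * Nat.factorial m) *
          (2 : ℝ) ^ (((m : ℝ) - 1) / 2) *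
          Real.exp (-‖(x : ℍ[ℝ]) + y • I‖ ^ 2 / 4)) •
        SB m f ((Real.sqrt 2)⁻¹ • star ((x : ℍ[ℝ]) + y • I)) := by
  -- components of I
  have hre : I.re = 0 := by
    have h1 := congrArg QuaternionAlgebra.re hI
    have h2 := congrArg QuaternionAlgebra.imI hI
    have h3 := congrArg QuaternionAlgebra.imJ hI
    have h4 := congrArg QuaternionAlgebra.imK hI
    simp [pow_two, Quaternion.re_mul, Quaternion.imI_mul, Quaternion.imJ_mul,
      Quaternion.imK_mul] at h1 h2 h3 h4
    nlinarith [sq_nonneg I.re, sq_nonneg I.imI, sq_nonneg I.imJ, sq_nonneg I.imK,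
      sq_nonneg (I.re*I.imI), sq_nonneg (I.re*I.imJ), sq_nonneg (I.re*I.imK)]
  have hn : I.imI^2 + I.imJ^2 + I.imK^2 = 1 := by
    have h1 := congrArg QuaternionAlgebra.re hI
    simp [pow_two, Quaternion.re_mul, hre] at h1
    nlinarith [h1]
  set q : ℍ[ℝ] := (Real.sqrt 2)⁻¹ • star ((x : ℍ[ℝ]) + y • I) with hq
  -- norm of x + y I
  have hnorm : ‖(x : ℍ[ℝ]) + y • I‖ ^ 2 = x^2 + y^2 := by
    have h := Quaternion.normSq_eq_norm_mul_self ((x : ℍ[ℝ]) + y • I)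
    rw [pow_two, ← h, Quaternion.normSq_def']
    simp only [Quaternion.re_add, Quaternion.imI_add, Quaternion.imJ_add, Quaternion.imK_add,
      Quaternion.re_smul, Quaternion.imI_smul, Quaternion.imJ_smul, Quaternion.imK_smul,
      Quaternion.re_coe, Quaternion.imI_coe, Quaternion.imJ_coe, Quaternion.imK_coe, hre,
      smul_eq_mul]
    ring_nf
    linear_combination y^2 * hn
  -- real part of q
  have hqre : Real.sqrt 2 * q.re = x := by
    rw [hq]
    simp only [Quaternion.re_smul, Quaternion.re_star, Quaternion.re_add, Quaternion.re_coe,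
      Quaternion.re_smul, hre, smul_eq_mul]
    rw [mul_comm y 0]
    field_simp
    ring
  -- the core pointwise kernel identity
  have core : ∀ s : ℝ,
      (Real.exp (-‖(x : ℍ[ℝ]) + y • I‖ ^ 2 / 4)) • kernelA m s q
        = ((Real.sqrt (Real.sqrt Real.pi * Nat.factorial m) *
            (2 : ℝ) ^ (((m : ℝ) - 1) / 2))⁻¹ * ((Real.sqrt (2 * Real.pi))⁻¹ *
              (Real.exp (-(s - x) ^ 2 / 2) * physHermite m (-(s - x))))) •
            NormedSpace.exp ((y * (s - x/2)) • I) := by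
    intro s
    let +nondep : NormedAlgebra ℚ ℍ := .restrictScalars ℚ ℝ ℍ
    rw [kernelA, hq, stmt18_expo I hre hn x y s,
      NormedSpace.exp_add_of_commute (Quaternion.coe_commute _ _),
      Quaternion.exp_coe, ← Real.exp_eq_exp_ℝ, Quaternion.coe_mul_eq_smul]
    have harg : Real.sqrt 2 * q.re - s = -(s - x) := by rw [hqre]; ring
    rw [← hq, harg]
    rw [Quaternion.mul_coe_eq_smul, smul_smul, smul_smul, smul_smul]
    congr 1
    rw [hnorm]
    have hexp : Real.exp (-(x^2+y^2)/4) * Real.exp (-(s^2)/2 + s*x - (x^2 - y^2)/4)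
        = Real.exp (-(s - x)^2/2) := by
      rw [← Real.exp_add]; congr 1; ring
    have hconst := stmt18_const m
    have hCpos : (0:ℝ) < Real.sqrt (Real.sqrt Real.pi * Nat.factorial m) *
        (2 : ℝ) ^ (((m : ℝ) - 1) / 2) := by
      have : (0:ℝ) < Real.sqrt (Real.sqrt Real.pi * Nat.factorial m) := by positivity
      have h2 : (0:ℝ) < (2:ℝ) ^ (((m : ℝ) - 1) / 2) := Real.rpow_pos_of_pos (by norm_num) _
      positivity
    rw [eq_comm, inv_mul_eq_iff_eq_mul₀ hCpos.ne']
    rw [hconst, ← hexp]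
    ring
  -- pointwise identity with f
  have key : ∀ s : ℝ,
      (Real.sqrt (2 * Real.pi))⁻¹ •
        ((Real.exp (-(s - x) ^ 2 / 2) * physHermite m (-(s - x))) •
          (NormedSpace.exp ((y * (s - x/2)) • I) * f s))
      = (Real.sqrt (Real.sqrt Real.pi * Nat.factorial m) *
          (2 : ℝ) ^ (((m : ℝ) - 1) / 2) *
          Real.exp (-‖(x : ℍ[ℝ]) + y • I‖ ^ 2 / 4)) • (kernelA m s q * f s) := by
    intro s
    have h := congrArg (fun z : ℍ[ℝ] =>
      (Real.sqrt (Real.sqrt Real.pi * Nat.factorial m) *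
        (2 : ℝ) ^ (((m : ℝ) - 1) / 2)) • (z * f s)) (core s)
    simp only [smul_mul_assoc, smul_smul] at h
    rw [h, smul_smul]
    congr 1
    have hCpos : (0:ℝ) < Real.sqrt (Real.sqrt Real.pi * Nat.factorial m) *
        (2 : ℝ) ^ (((m : ℝ) - 1) / 2) := by
      have : (0:ℝ) < Real.sqrt (Real.sqrt Real.pi * Nat.factorial m) := by positivity
      have h2 : (0:ℝ) < (2:ℝ) ^ (((m : ℝ) - 1) / 2) := Real.rpow_pos_of_pos (by norm_num) _
      positivity
    field_simp
  -- change of variables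
  have hint : (∫ t : ℝ,
        (Real.exp (-(t - x / 2) ^ 2 / 2) * physHermite m (-(t - x / 2))) •
          (NormedSpace.exp ((y * t) • I) * f (t + x / 2)))
      = ∫ s : ℝ, (Real.exp (-(s - x) ^ 2 / 2) * physHermite m (-(s - x))) •
          (NormedSpace.exp ((y * (s - x/2)) • I) * f s) := by
    rw [← MeasureTheory.integral_add_right_eq_self
      (fun s : ℝ => (Real.exp (-(s - x) ^ 2 / 2) * physHermite m (-(s - x))) •
        (NormedSpace.exp ((y * (s - x/2)) • I) * f s)) (x/2)]
    congr 1
    funext t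
    have e1 : t + x/2 - x = t - x/2 := by ring
    have e2 : t + x/2 - x/2 = t := by ring
    rw [e1, e2]
  rw [hint, ← MeasureTheory.integral_smul, SB, ← MeasureTheory.integral_smul]
  exact MeasureTheory.integral_congr_ae (Filter.Eventually.of_forall key)
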